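/- Let α > 0 and let G = (V,E) be a graph with nonnegative edge-weight function w such that every nonzero edge weight is at least 1. Let T₁, T₂ be spanning trees of G, let w_r assign each edge a weight in [0, 1/|V|⁴], and let w′ = w + w_r. Then for all sufficiently large |V|, c_{w′}(T₁) ≤ α · c_{w′}(T₂) implies c_w(T₁) ≤ α · (1 + 1/(2|V|)) · c_w(T₂). -/

import Mathlib

open SimpleGraph

/-- The weight of a walk: the sum of the weights of its edges. -/
noncomputable def walkWeight {V : Type*} {G : SimpleGraph V} (w : Sym2 V → ℝ)
    {u v : V} (p : G.Walk u v) : ℝ :=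
  (p.edges.map w).sum

/-- The distance between two vertices of a tree: the weight of the unique simple path. -/
noncomputable def treeDist {V : Type*} {T : SimpleGraph V} (hT : T.IsTree)
    (w : Sym2 V → ℝ) (u v : V) : ℝ :=
  walkWeight w (hT.existsUnique_path u v).choose

lemma treeDist_add {V : Type*} {T : SimpleGraph V} (hT : T.IsTree)
    (w wr : Sym2 V → ℝ) (u v : V) :
    treeDist hT (fun e => w e + wr e) u v = treeDist hT w u v + treeDist hT wr u v := by
  unfold treeDist walkWeight
  generalize (hT.existsUnique_path u v).choose.edges = l
  induction l with
  | nil => simp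
  | cons a l ih => simp [ih]; ring

lemma treeDist_nonneg {V : Type*} {T : SimpleGraph V} (hT : T.IsTree)
    {w : Sym2 V → ℝ} (hw : ∀ e, 0 ≤ w e) (u v : V) : 0 ≤ treeDist hT w u v := by
  unfold treeDist walkWeight
  apply List.sum_nonneg
  intro x hx
  obtain ⟨e, _, rfl⟩ := List.mem_map.1 hx
  exact hw e

lemma treeDist_self {V : Type*} {T : SimpleGraph V} (hT : T.IsTree)
    (w : Sym2 V → ℝ) (u : V) : treeDist hT w u u = 0 := by
  have h := (hT.existsUnique_path u u).choose_spec
  have heq : (hT.existsUnique_path u u).choose = Walk.nil := (h.2 Walk.nil (Walk.IsPath.nil)).symm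
  unfold treeDist walkWeight
  rw [heq]
  simp

lemma treeDist_symm {V : Type*} {T : SimpleGraph V} (hT : T.IsTree)
    (w : Sym2 V → ℝ) (u v : V) : treeDist hT w u v = treeDist hT w v u := by
  have h1 := (hT.existsUnique_path u v).choose_spec
  have h2 := (hT.existsUnique_path v u).choose_spec
  have : (hT.existsUnique_path v u).choose = (hT.existsUnique_path u v).choose.reverse :=
    (h2.2 _ (h1.1.reverse)).symm
  unfold treeDist walkWeight
  rw [this, Walk.edges_reverse, List.map_reverse, List.sum_reverse]

lemma treeDist_dichot {V : Type*} {T : SimpleGraph V} (hT : T.IsTree)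
    {w : Sym2 V → ℝ} (hw : ∀ e, w e = 0 ∨ 1 ≤ w e) (u v : V) :
    treeDist hT w u v = 0 ∨ 1 ≤ treeDist hT w u v := by
  unfold treeDist walkWeight
  have key : ∀ l : List ℝ, (∀ x ∈ l, x = 0 ∨ 1 ≤ x) → l.sum = 0 ∨ 1 ≤ l.sum := by
    intro l hl
    induction l with
    | nil => left; simp
    | cons a l ih =>
      have hnn : 0 ≤ l.sum := List.sum_nonneg (fun x hx => by
        rcases hl x (List.mem_cons_of_mem a hx) with h | h <;> linarith)
      rcases hl a (List.mem_cons_self) with ha | ha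
      · rcases ih (fun x hx => hl x (List.mem_cons_of_mem a hx)) with h | h
        · left; simp [ha, h]
        · right; simp only [List.sum_cons, ha, zero_add]; exact h
      · right; simp only [List.sum_cons]; linarith
  apply key
  intro x hx
  obtain ⟨e, _, rfl⟩ := List.mem_map.1 hx
  exact hw e

lemma treeDist_le {V : Type*} [Fintype V] {T : SimpleGraph V} (hT : T.IsTree)
    {w : Sym2 V → ℝ} {b : ℝ} (hb : 0 ≤ b) (hw : ∀ e, w e ≤ b) (u v : V) :
    treeDist hT w u v ≤ (Fintype.card V : ℝ) * b := by
  unfold treeDist walkWeight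
  have hpath := (hT.existsUnique_path u v).choose_spec.1
  calc ((hT.existsUnique_path u v).choose.edges.map w).sum
      ≤ ((hT.existsUnique_path u v).choose.edges.map w).length • b := by
        apply List.sum_le_card_nsmul
        intro x hx
        obtain ⟨e, _, rfl⟩ := List.mem_map.1 hx
        exact hw e
    _ ≤ (Fintype.card V : ℝ) * b := by
        rw [nsmul_eq_mul, List.length_map, Walk.length_edges]
        apply mul_le_mul_of_nonneg_right _ hb
        exact_mod_cast (hpath.length_lt).le

/-- for any `α > 0` and all sufficiently large `|V|`: if every nonzero edge
weight of `w` is at least `1`, the perturbation `w_r` takes values in `[0, 1/|V|⁴]`, and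
`w′ = w + w_r`, then `c_{w′}(T₁) ≤ α c_{w′}(T₂)` implies
`c_w(T₁) ≤ α (1 + 1/(2|V|)) c_w(T₂)` for spanning trees `T₁, T₂` of `G`. -/
theorem stmt5 (α : ℝ) (hα : 0 < α) :
    ∃ N : ℕ, ∀ (V : Type) [Fintype V], ∀ (G T₁ T₂ : SimpleGraph V)
      (w wr : Sym2 V → ℝ), N ≤ Fintype.card V →
      (∀ e, w e = 0 ∨ 1 ≤ w e) →
      (∀ e, 0 ≤ wr e ∧ wr e ≤ 1 / (Fintype.card V : ℝ) ^ 4) →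
      T₁ ≤ G → T₂ ≤ G → ∀ (h₁ : T₁.IsTree) (h₂ : T₂.IsTree),
      (∑ u : V, ∑ v : V, treeDist h₁ (fun e => w e + wr e) u v) ≤
        α * ∑ u : V, ∑ v : V, treeDist h₂ (fun e => w e + wr e) u v →
      (∑ u : V, ∑ v : V, treeDist h₁ w u v) ≤
        α * (1 + 1 / (2 * (Fintype.card V : ℝ))) * ∑ u : V, ∑ v : V, treeDist h₂ w u v := by
  refine ⟨⌈α⌉₊ + 1, ?_⟩
  intro V _ G T₁ T₂ w wr hN hw hwr _ _ h₁ h₂ hyp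
  classical
  set n : ℝ := (Fintype.card V : ℝ) with hn
  have hn1 : (1 : ℝ) ≤ n := by
    have h1 : 1 ≤ Fintype.card V := le_trans (Nat.le_add_left 1 ⌈α⌉₊) hN
    rw [hn]; exact_mod_cast h1
  have hn0 : 0 < n := lt_of_lt_of_le one_pos hn1
  have hαn : α < n := by
    have h1 : α ≤ (⌈α⌉₊ : ℝ) := Nat.le_ceil α
    have h2 : (⌈α⌉₊ : ℝ) + 1 ≤ n := by rw [hn]; exact_mod_cast hN
    linarith
  have hw0 : ∀ e, 0 ≤ w e := fun e => by rcases hw e with h | h <;> linarith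
  -- abbreviations
  set S1 := ∑ u : V, ∑ v : V, treeDist h₁ w u v with hS1
  set S2 := ∑ u : V, ∑ v : V, treeDist h₂ w u v with hS2
  set R1 := ∑ u : V, ∑ v : V, treeDist h₁ wr u v with hR1
  set R2 := ∑ u : V, ∑ v : V, treeDist h₂ wr u v with hR2
  have hsplit1 : ∑ u : V, ∑ v : V, treeDist h₁ (fun e => w e + wr e) u v = S1 + R1 := by
    rw [hS1, hR1, ← Finset.sum_add_distrib]
    apply Finset.sum_congr rfl; intro u _
    rw [← Finset.sum_add_distrib]
    exact Finset.sum_congr rfl fun v _ => treeDist_add h₁ w wr u v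
  have hsplit2 : ∑ u : V, ∑ v : V, treeDist h₂ (fun e => w e + wr e) u v = S2 + R2 := by
    rw [hS2, hR2, ← Finset.sum_add_distrib]
    apply Finset.sum_congr rfl; intro u _
    rw [← Finset.sum_add_distrib]
    exact Finset.sum_congr rfl fun v _ => treeDist_add h₂ w wr u v
  rw [hsplit1, hsplit2] at hyp
  have hR1nn : 0 ≤ R1 :=
    Finset.sum_nonneg fun u _ => Finset.sum_nonneg fun v _ =>
      treeDist_nonneg h₁ (fun e => (hwr e).1) u v
  have hR2nn : 0 ≤ R2 :=
    Finset.sum_nonneg fun u _ => Finset.sum_nonneg fun v _ =>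
      treeDist_nonneg h₂ (fun e => (hwr e).1) u v
  have hb : (0:ℝ) ≤ 1 / n ^ 4 := by positivity
  have hR2le : R2 ≤ 1 / n := by
    have hterm : ∀ u v : V, treeDist h₂ wr u v ≤ n * (1 / n ^ 4) :=
      fun u v => treeDist_le h₂ hb (fun e => (hwr e).2) u v
    calc R2 ≤ ∑ _u : V, ∑ _v : V, n * (1 / n ^ 4) := by
          apply Finset.sum_le_sum; intro u _
          exact Finset.sum_le_sum fun v _ => hterm u v
      _ = n * n * (n * (1 / n ^ 4)) := by
          simp [Finset.sum_const, hn]; ring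
      _ ≤ 1 / n := by
          have heq : n * n * (n * (1 / n ^ 4)) = 1 / n := by
            field_simp
          rw [heq]
  have hS1nn : 0 ≤ S1 :=
    Finset.sum_nonneg fun u _ => Finset.sum_nonneg fun v _ => treeDist_nonneg h₁ hw0 u v
  have hS2nn : 0 ≤ S2 :=
    Finset.sum_nonneg fun u _ => Finset.sum_nonneg fun v _ => treeDist_nonneg h₂ hw0 u v
  -- dichotomy for total sums
  have dichot : ∀ (T : SimpleGraph V) (hT : T.IsTree),
      (∑ u : V, ∑ v : V, treeDist hT w u v) = 0 ∨
      2 ≤ ∑ u : V, ∑ v : V, treeDist hT w u v := by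
    intro T hT
    by_cases hall : ∀ u v : V, treeDist hT w u v = 0
    · left; simp [hall]
    · right
      push_neg at hall
      obtain ⟨u, v, huv⟩ := hall
      have h1 : 1 ≤ treeDist hT w u v := (treeDist_dichot hT hw u v).resolve_left huv
      have hne : u ≠ v := by
        rintro rfl; exact huv (treeDist_self hT w u)
      have h2 : 1 ≤ treeDist hT w v u := by rw [treeDist_symm]; exact h1
      set g : V → ℝ := fun x => ∑ y : V, treeDist hT w x y with hg
      have hgnn : ∀ x ∈ Finset.univ, 0 ≤ g x :=
        fun x _ => Finset.sum_nonneg fun y _ => treeDist_nonneg hT hw0 x y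
      have hgu : 1 ≤ g u :=
        le_trans h1 (Finset.single_le_sum (fun y _ => treeDist_nonneg hT hw0 u y)
          (Finset.mem_univ v))
      have hgv : 1 ≤ g v :=
        le_trans h2 (Finset.single_le_sum (fun y _ => treeDist_nonneg hT hw0 v y)
          (Finset.mem_univ u))
      have hsub : ({u, v} : Finset V) ⊆ Finset.univ := Finset.subset_univ _
      have : g u + g v ≤ ∑ x : V, g x := by
        rw [← Finset.sum_pair hne]
        exact Finset.sum_le_sum_of_subset_of_nonneg hsub fun x _ _ => hgnn x (Finset.mem_univ x)
      linarith
  have key : S1 ≤ α * S2 + α * (1 / n) := by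
    have : S1 ≤ α * (S2 + R2) := by linarith
    nlinarith [hR2le, hR2nn]
  rcases dichot T₂ h₂ with h0 | h2le
  · -- S2 = 0 : show S1 = 0
    rw [← hS2] at h0
    have hS1small : S1 < 1 := by
      rw [h0] at key
      have : α * (1 / n) < 1 := by
        rw [mul_one_div, div_lt_one hn0]; exact hαn
      linarith
    have : S1 = 0 := by
      rcases dichot T₁ h₁ with h | h
      · rw [← hS1] at h; exact h
      · rw [← hS1] at h; linarith
    rw [this, h0]; ring_nf; simp
  · rw [← hS2] at h2le
    have : α * (1 / n) ≤ α * (1 / (2 * n)) * S2 := by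
      have heq : α * (1 / n) = α * (1 / (2 * n)) * 2 := by
        field_simp
      rw [heq]
      exact mul_le_mul_of_nonneg_left h2le (by positivity)
    calc S1 ≤ α * S2 + α * (1 / n) := key
      _ ≤ α * S2 + α * (1 / (2 * n)) * S2 := by linarith
      _ = α * (1 + 1 / (2 * n)) * S2 := by ring
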